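/- The Artin–Schreier map ℘(x) = x^p − x on F_p(t) is an additive group homomorphism whose kernel is F_p, and the polynomials t^n for n ≥ 1 with p ∤ n represent F_p-linearly independent classes in F_p(t)/℘(F_p(t)); hence dim_{F_p} F_p(t)/℘(F_p(t)) is infinite. -/

import Mathlib

open Polynomial

section AuxAS

variable (p : ℕ) [Fact p.Prime]

private lemma as_factn : (X ^ p - X : (ZMod p)[X]) = ∏ a : ZMod p, (X - C a) := by
  have h := FiniteField.roots_X_pow_card_sub_X (ZMod p)
  rw [ZMod.card p] at h
  have hm : (X ^ p - X : (ZMod p)[X]).Monic :=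
    monic_X_pow_sub (degree_X_le.trans_lt (by exact_mod_cast (Fact.out : p.Prime).one_lt))
  have hd : (X ^ p - X : (ZMod p)[X]).natDegree = p :=
    FiniteField.X_pow_card_sub_X_natDegree_eq _ (Fact.out : p.Prime).one_lt
  have := prod_multiset_X_sub_C_of_monic_of_roots_card_eq hm (by rw [h, hd]; simp [ZMod.card p])
  rw [h] at this
  rw [← this]
  rfl

/-- Kernel part: `x^p - x = 0` iff `x` is a constant. -/
private lemma as_ker (x : RatFunc (ZMod p)) :
    x ^ p - x = 0 ↔ ∃ c : ZMod p, x = algebraMap (ZMod p) (RatFunc (ZMod p)) c := by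
  constructor
  · intro hx
    have h0 : (aeval x (X ^ p - X : (ZMod p)[X])) = 0 := by
      simpa using hx
    rw [as_factn p] at h0
    rw [map_prod] at h0
    simp only [map_sub, aeval_X, aeval_C] at h0
    obtain ⟨a, -, ha⟩ := Finset.prod_eq_zero_iff.mp h0
    exact ⟨a, sub_eq_zero.mp ha⟩
  · rintro ⟨c, rfl⟩
    rw [← map_pow, ← map_sub, ZMod.pow_card, sub_self, map_zero]

/-- If a polynomial supported in degrees not divisible by `p` equals `q^p - q`, it is zero. -/
private lemma as_poly (q : (ZMod p)[X]) (c : ℕ →₀ ZMod p) (hc : ∀ n ∈ c.support, ¬ p ∣ n)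
    (h : q ^ p - q = ∑ n ∈ c.support, C (c n) * X ^ n) : c = 0 := by
  set P : (ZMod p)[X] := ∑ n ∈ c.support, C (c n) * X ^ n with hP
  have hcoeff : ∀ m, P.coeff m = c m := by
    intro m
    rw [hP, finset_sum_coeff]
    simp only [coeff_C_mul, coeff_X_pow]
    rw [Finset.sum_eq_single m (fun n _ hn => by simp [(Ne.symm hn : m ≠ n)]) (fun hm => by
      simp [Finsupp.notMem_support_iff.mp hm])]
    simp
  have hq0 : q.natDegree = 0 := by
    by_contra hd
    have hd1 : 1 ≤ q.natDegree := Nat.one_le_iff_ne_zero.mpr hd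
    have hqne : q ≠ 0 := fun h0 => by simp [h0] at hd
    have hdeg : (q ^ p).natDegree = p * q.natDegree := by
      rw [natDegree_pow]
    have hlt' : q.natDegree < (q ^ p).natDegree := by
      rw [hdeg]
      nlinarith [(Fact.out : p.Prime).one_lt]
    have hdsub : (q ^ p - q).natDegree = p * q.natDegree := by
      rw [natDegree_sub_eq_left_of_natDegree_lt hlt', hdeg]
    have hne : (q ^ p - q) ≠ 0 := by
      intro h0
      rw [h0, natDegree_zero] at hdsub
      rcases Nat.mul_eq_zero.mp hdsub.symm with h | h
      · exact (Fact.out : p.Prime).ne_zero h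
      · omega
    have hlead : (q ^ p - q).coeff (p * q.natDegree) ≠ 0 := by
      rw [← hdsub]
      exact fun h0 => hne (leadingCoeff_eq_zero.mp h0)
    rw [h, hcoeff] at hlead
    have : p * q.natDegree ∈ c.support := Finsupp.mem_support_iff.mpr hlead
    exact hc _ this ⟨q.natDegree, rfl⟩
  -- q is constant, so q^p - q = 0
  have hq : q ^ p - q = 0 := by
    obtain ⟨a, rfl⟩ := natDegree_eq_zero.mp hq0
    rw [← C_pow, ← C_sub, ZMod.pow_card, sub_self, map_zero]
  rw [hq] at h
  ext m
  have := hcoeff m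
  rw [← h] at this
  simpa using this.symm

end AuxAS

/-- The Artin–Schreier additive homomorphism `℘(x) = x^p - x` on a field of
characteristic `p`. -/
def artinSchreier (p : ℕ) [Fact p.Prime] (K : Type*) [Field K] [CharP K p] : K →+ K where
  toFun x := x ^ p - x
  map_zero' := by
    simp [zero_pow (Fact.out : p.Prime).ne_zero]
  map_add' x y := by
    show (x + y) ^ p - (x + y) = (x ^ p - x) + (y ^ p - y)
    rw [add_pow_char (R := K) x y]
    ring

instance (p : ℕ) [Fact p.Prime] : CharP (RatFunc (ZMod p)) p :=
  charP_of_injective_algebraMap (algebraMap (ZMod p) (RatFunc (ZMod p))).injective p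

section AuxAS2

variable (p : ℕ) [Fact p.Prime]

/-- The independence statement in `RatFunc`. -/
private lemma as_indep (c : ℕ →₀ ZMod p) (hc : ∀ n ∈ c.support, 1 ≤ n ∧ ¬ p ∣ n)
    (hmem : (∑ n ∈ c.support, algebraMap (ZMod p) (RatFunc (ZMod p)) (c n) * RatFunc.X ^ n) ∈
      Set.range (artinSchreier p (RatFunc (ZMod p)))) : c = 0 := by
  obtain ⟨y, hy⟩ := hmem
  have hy' : y ^ p - y =
      ∑ n ∈ c.support, algebraMap (ZMod p) (RatFunc (ZMod p)) (c n) * RatFunc.X ^ n := hy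
  set P : (ZMod p)[X] := ∑ n ∈ c.support, C (c n) * X ^ n with hP
  have hPmap : algebraMap (ZMod p)[X] (RatFunc (ZMod p)) P =
      ∑ n ∈ c.support, algebraMap (ZMod p) (RatFunc (ZMod p)) (c n) * RatFunc.X ^ n := by
    rw [hP, map_sum]
    refine Finset.sum_congr rfl fun n _ => ?_
    rw [map_mul, map_pow, RatFunc.algebraMap_X, RatFunc.algebraMap_C]
    rfl
  -- y is integral over (ZMod p)[X]
  have hyint : IsIntegral (ZMod p)[X] y := by
    refine ⟨X ^ p - (X + C P), ?_, ?_⟩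
    · apply monic_X_pow_sub
      have h1 : (X + C P : ((ZMod p)[X])[X]).degree ≤ 1 :=
        (degree_add_le _ _).trans (max_le degree_X_le
          (degree_C_le.trans (by norm_num)))
      calc (X + C P : ((ZMod p)[X])[X]).degree ≤ 1 := h1
        _ < (p : ℕ) := by exact_mod_cast (Fact.out : p.Prime).one_lt
    · show aeval y (X ^ p - (X + C P)) = 0
      rw [map_sub, map_add, aeval_X_pow, aeval_X, aeval_C]
      show y ^ p - (y + algebraMap (ZMod p)[X] (RatFunc (ZMod p)) P) = 0
      rw [hPmap, ← hy']
      ring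
  obtain ⟨q, hq⟩ := IsIntegrallyClosed.isIntegral_iff.mp hyint
  have hqP : q ^ p - q = P := by
    have : algebraMap (ZMod p)[X] (RatFunc (ZMod p)) (q ^ p - q) =
        algebraMap (ZMod p)[X] (RatFunc (ZMod p)) P := by
      rw [map_sub, map_pow, hq, hPmap, hy']
    exact IsFractionRing.injective (ZMod p)[X] (RatFunc (ZMod p)) this
  exact as_poly p q c (fun n hn => (hc n hn).2) (by rw [hqP, hP])

end AuxAS2

/-- the Artin–Schreier map `℘(x) = x^p - x` on `F_p(t)` has kernel `F_p`,
the classes of `t^n` (for `n ≥ 1`, `p ∤ n`) are `F_p`-linearly independent in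
`F_p(t)/℘(F_p(t))`, and hence this quotient is infinite-dimensional over `F_p`. -/
theorem artinSchreier_kernel_and_independence (p : ℕ) [Fact p.Prime] :
    (∀ x : RatFunc (ZMod p),
        artinSchreier p (RatFunc (ZMod p)) x = 0 ↔
        ∃ c : ZMod p, x = algebraMap (ZMod p) (RatFunc (ZMod p)) c) ∧
    (∀ c : ℕ →₀ ZMod p, (∀ n ∈ c.support, 1 ≤ n ∧ ¬ p ∣ n) →
        (∑ n ∈ c.support, algebraMap (ZMod p) (RatFunc (ZMod p)) (c n) * RatFunc.X ^ n) ∈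
          Set.range (artinSchreier p (RatFunc (ZMod p))) →
        c = 0) ∧
    Infinite (RatFunc (ZMod p) ⧸ (artinSchreier p (RatFunc (ZMod p))).range) := by
  refine ⟨fun x => as_ker p x, fun c hc hmem => as_indep p c hc hmem, ?_⟩
  -- Infinitude via injectivity of n ↦ [t^(n*p+1)]
  set φ : RatFunc (ZMod p) →+ _ :=
    QuotientAddGroup.mk' (artinSchreier p (RatFunc (ZMod p))).range with hφ
  refine Infinite.of_injective (fun n : ℕ => φ (RatFunc.X ^ (n * p + 1))) ?_
  intro a b hab
  by_contra hne
  have hne' : a * p + 1 ≠ b * p + 1 := by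
    simp only [ne_eq, Nat.add_right_cancel_iff]
    exact fun h => hne (Nat.eq_of_mul_eq_mul_right (Fact.out : p.Prime).pos h)
  have hab' : (QuotientAddGroup.mk (RatFunc.X ^ (a * p + 1)) :
      RatFunc (ZMod p) ⧸ (artinSchreier p (RatFunc (ZMod p))).range) =
      QuotientAddGroup.mk (RatFunc.X ^ (b * p + 1)) := hab
  have hsub : RatFunc.X ^ (a * p + 1) - RatFunc.X ^ (b * p + 1) ∈
      (artinSchreier p (RatFunc (ZMod p))).range :=
    (QuotientAddGroup.eq_iff_sub_mem).mp hab'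
  set c : ℕ →₀ ZMod p :=
    Finsupp.single (a * p + 1) 1 - Finsupp.single (b * p + 1) 1 with hcdef
  have hca : c (a * p + 1) = 1 := by
    simp [hcdef, Finsupp.single_apply, hne', Ne.symm hne', Ne.symm hne, (Fact.out : p.Prime).ne_zero]
  have hcb : c (b * p + 1) = -1 := by
    simp [hcdef, Finsupp.single_apply, hne', Ne.symm hne', hne, (Fact.out : p.Prime).ne_zero]
  have hsupp : c.support = {a * p + 1, b * p + 1} := by
    ext n
    simp only [Finsupp.mem_support_iff, hcdef, Finsupp.sub_apply, Finsupp.single_apply,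
      Finset.mem_insert, Finset.mem_singleton]
    by_cases h1 : a * p + 1 = n <;> by_cases h2 : b * p + 1 = n <;>
      simp [h1, h2] <;> omega
  have key : c = 0 := by
    apply as_indep p c
    · intro n hn
      rw [hsupp] at hn
      have key : ∀ m : ℕ, 1 ≤ m * p + 1 ∧ ¬ p ∣ m * p + 1 := fun m =>
        ⟨Nat.le_add_left 1 _, fun h => (Fact.out : p.Prime).ne_one
          (Nat.dvd_one.mp ((Nat.dvd_add_right ⟨m, mul_comm m p⟩).mp h))⟩
      rcases Finset.mem_insert.mp hn with rfl | hn
      · exact key a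
      · rw [Finset.mem_singleton] at hn
        subst hn
        exact key b
    · rw [hsupp, Finset.sum_pair hne', hca, hcb]
      simp only [map_one, map_neg, one_mul, neg_one_mul]
      show RatFunc.X ^ (a * p + 1) + -(RatFunc.X ^ (b * p + 1)) ∈ _
      rw [← sub_eq_add_neg]
      exact hsub
  rw [key] at hca
  simp at hca
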